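/- Let E, F ∈ ℝⁿˣⁿ, G ∈ ℝᵖˣⁿ, let P be an n×n symmetric positive-definite matrix, and let μ > 0. If F'P⁻¹F + P − E − E' + G'G ⪯ −μI, then E + E' ⪰ μI, and for every Δ ∈ ℝⁿ the contraction inequality |FΔ|²_{P⁻¹} − |EΔ|²_{P⁻¹} + |GΔ|² ≤ −μ|Δ|² holds. -/

import Mathlib

open Matrix

/-- If the convex contraction condition
`F'P⁻¹F + P − E − E' + G'G ⪯ −μI` holds (with `P` symmetric positive definite,
`μ > 0`), then `E + E' ⪰ μI`, and for every `Δ` the contraction inequality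
`|FΔ|²_{P⁻¹} − |EΔ|²_{P⁻¹} + |GΔ|² ≤ −μ|Δ|²` holds. -/
theorem stmt12 {n p : ℕ}
    (E F : Matrix (Fin n) (Fin n) ℝ) (G : Matrix (Fin p) (Fin n) ℝ)
    (P : Matrix (Fin n) (Fin n) ℝ) (hP : P.PosDef) (μ : ℝ) (hμ : 0 < μ)
    (hcontr : ((-μ) • (1 : Matrix (Fin n) (Fin n) ℝ)
        - (Fᵀ * P⁻¹ * F + P - E - Eᵀ + Gᵀ * G)).PosSemidef) :
    (E + Eᵀ - μ • (1 : Matrix (Fin n) (Fin n) ℝ)).PosSemidef ∧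
    (∀ Δ : Fin n → ℝ,
      (F *ᵥ Δ) ⬝ᵥ (P⁻¹ *ᵥ (F *ᵥ Δ)) - (E *ᵥ Δ) ⬝ᵥ (P⁻¹ *ᵥ (E *ᵥ Δ))
        + (G *ᵥ Δ) ⬝ᵥ (G *ᵥ Δ) ≤ -μ * (Δ ⬝ᵥ Δ)) := by
  have hPinv : (P⁻¹).PosSemidef := hP.inv.posSemidef
  have hFPF : (Fᵀ * P⁻¹ * F).PosSemidef := by
    have := hPinv.conjTranspose_mul_mul_same F
    simpa [Matrix.conjTranspose_eq_transpose_of_trivial] using this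
  have hGG : (Gᵀ * G).PosSemidef := by
    have := Matrix.posSemidef_conjTranspose_mul_self G
    simpa [Matrix.conjTranspose_eq_transpose_of_trivial] using this
  constructor
  · have h := ((hcontr.add hFPF).add hP.posSemidef).add hGG
    have heq : (-μ) • (1 : Matrix (Fin n) (Fin n) ℝ)
        - (Fᵀ * P⁻¹ * F + P - E - Eᵀ + Gᵀ * G) + Fᵀ * P⁻¹ * F + P + Gᵀ * G
        = E + Eᵀ - μ • (1 : Matrix (Fin n) (Fin n) ℝ) := by
      rw [neg_smul]; abel
    rwa [heq] at h
  · intro Δ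
    have hPP : P⁻¹ * P = 1 := Matrix.nonsing_inv_mul P (isUnit_iff_ne_zero.mpr hP.det_pos.ne')
    have hdot : ∀ {m : ℕ} (A : Matrix (Fin m) (Fin n) ℝ) (y : Fin m → ℝ),
        Δ ⬝ᵥ (Aᵀ *ᵥ y) = (A *ᵥ Δ) ⬝ᵥ y := by
      intro m A y
      rw [Matrix.dotProduct_mulVec, Matrix.vecMul_transpose]
    -- main inequality from hcontr
    have h1 := hcontr.dotProduct_mulVec_nonneg Δ
    simp only [star_trivial, Matrix.sub_mulVec, Matrix.add_mulVec,
      Matrix.smul_mulVec, Matrix.one_mulVec, dotProduct_sub,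
      dotProduct_add, dotProduct_smul, smul_eq_mul, ← Matrix.mulVec_mulVec] at h1
    rw [hdot F, hdot E, hdot G] at h1
    -- completion of squares: 0 ≤ (EΔ - PΔ)' P⁻¹ (EΔ - PΔ)
    have h2 := hPinv.dotProduct_mulVec_nonneg (E *ᵥ Δ - P *ᵥ Δ)
    have hPinvP : P⁻¹ *ᵥ (P *ᵥ Δ) = Δ := by
      rw [Matrix.mulVec_mulVec, hPP, Matrix.one_mulVec]
    have hPsym : Pᵀ = P := by
      rw [← Matrix.conjTranspose_eq_transpose_of_trivial]; exact hP.1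
    have hPdotE : (P *ᵥ Δ) ⬝ᵥ (P⁻¹ *ᵥ (E *ᵥ Δ)) = Δ ⬝ᵥ (E *ᵥ Δ) := by
      rw [dotProduct_comm, Matrix.dotProduct_mulVec, ← Matrix.mulVec_transpose,
        hPsym]
      rw [Matrix.mulVec_mulVec, Matrix.mulVec_mulVec, Matrix.mul_nonsing_inv P (isUnit_iff_ne_zero.mpr hP.det_pos.ne'),
        one_mul, dotProduct_comm]
    simp only [star_trivial, Matrix.mulVec_sub, dotProduct_sub, sub_dotProduct,
      hPinvP] at h2
    rw [hPdotE] at h2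
    have hE : (E *ᵥ Δ) ⬝ᵥ Δ = Δ ⬝ᵥ (E *ᵥ Δ) := dotProduct_comm _ _
    rw [hE] at h2
    have hEt : (Eᵀ *ᵥ Δ) ⬝ᵥ Δ = Δ ⬝ᵥ (E *ᵥ Δ) := by
      rw [dotProduct_comm, hdot]
      exact dotProduct_comm _ _
    have hPd : (P *ᵥ Δ) ⬝ᵥ Δ = Δ ⬝ᵥ (P *ᵥ Δ) := dotProduct_comm _ _
    rw [hPd] at h2
    linarith
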